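/- arXiv:2010.14916 — 7 statements merged into one kernel-verified Lean document; each statement's English description precedes it below -/
import Mathlib

section
/- For all integers d > 1, m ≥ d and x with m ≤ x ≤ m², there exists a finite connected simple graph G with a distinguished vertex s such that G has exactly 1 + d + m vertices and exactly d + m + min(x, m(m−1)/2) edges, the eccentricity of s in G equals d, and the ball B_d(G,s) equals G (i.e., every vertex of G is at distance at most d from s and every edge of G has at least one endpoint at distance strictly less than d from s). -/
namespace Stmt0Aux

open SimpleGraph

variable (d m : ℕ)

abbrev V := Unit ⊕ Fin d ⊕ Fin m

/-- the path vertices: `c 0 = s`, `c (i+1) = a_i`. -/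
def c : Fin (d + 1) → V d m := Fin.cases (Sum.inl ()) (fun i => Sum.inr (Sum.inl i))

@[simp] lemma c_zero : c d m 0 = Sum.inl () := rfl
@[simp] lemma c_succ (i : Fin d) : c d m i.succ = Sum.inr (Sum.inl i) := by
  simp [c]

lemma c_injective : Function.Injective (c d m) := by
  intro a b
  induction a using Fin.cases <;> induction b using Fin.cases <;>
    simp [c, Fin.succ_inj]

def pathE : Finset (Sym2 (V d m)) :=
  Finset.image (fun i : Fin d => s(c d m i.castSucc, c d m i.succ)) Finset.univ

def starE : Finset (Sym2 (V d m)) :=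
  Finset.image (fun j : Fin m => s(Sum.inl (), Sum.inr (Sum.inr j))) Finset.univ

def bv (j : Fin m) : V d m := Sum.inr (Sum.inr j)

lemma bv_injective : Function.Injective (bv d m) := by
  intro a b h; simpa [bv] using h

def bE (F : Finset (Sym2 (Fin m))) : Finset (Sym2 (V d m)) :=
  F.image (Sym2.map (bv d m))

def S (F : Finset (Sym2 (Fin m))) : Finset (Sym2 (V d m)) :=
  pathE d m ∪ starE d m ∪ bE d m F

def G (F : Finset (Sym2 (Fin m))) : SimpleGraph (V d m) :=
  SimpleGraph.fromEdgeSet ↑(S d m F)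

/-- distance potential -/
def f : V d m → ℕ := Sum.elim (fun _ => 0) (Sum.elim (fun i => i.val + 1) (fun _ => 1))

@[simp] lemma f_c (k : Fin (d + 1)) : f d m (c d m k) = k.val := by
  induction k using Fin.cases <;> simp [f, c]

@[simp] lemma f_bv (j : Fin m) : f d m (bv d m j) = 1 := rfl
@[simp] lemma f_inl : f d m (Sum.inl ()) = 0 := rfl
@[simp] lemma f_a (i : Fin d) : f d m (Sum.inr (Sum.inl i)) = i.val + 1 := rfl
@[simp] lemma f_b (j : Fin m) : f d m (Sum.inr (Sum.inr j)) = 1 := rfl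

lemma adj_iff {F : Finset (Sym2 (Fin m))} {u v : V d m} :
    (G d m F).Adj u v ↔ s(u, v) ∈ S d m F ∧ u ≠ v := by
  rw [G, SimpleGraph.fromEdgeSet_adj, Finset.mem_coe]

variable {d m}
variable {F : Finset (Sym2 (Fin m))}

lemma mem_S_cases {u v : V d m} (h : s(u, v) ∈ S d m F) :
    (∃ i : Fin d, s(u, v) = s(c d m i.castSucc, c d m i.succ)) ∨
    (∃ j : Fin m, s(u, v) = s(Sum.inl (), bv d m j)) ∨
    (∃ a b : Fin m, s(u, v) = s(bv d m a, bv d m b)) := by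
  simp only [S, Finset.mem_union, pathE, starE, bE, Finset.mem_image,
    Finset.mem_univ, true_and] at h
  rcases h with (⟨i, hi⟩ | ⟨j, hj⟩) | ⟨e, _, he⟩
  · exact Or.inl ⟨i, hi.symm⟩
  · exact Or.inr (Or.inl ⟨j, hj.symm⟩)
  · refine Or.inr (Or.inr ?_)
    induction e using Sym2.ind with
    | _ a b => exact ⟨a, b, by rw [← he]; rfl⟩

lemma lipschitz {u v : V d m} (h : s(u, v) ∈ S d m F) :
    f d m v ≤ f d m u + 1 := by
  rcases mem_S_cases h with ⟨i, hi⟩ | ⟨j, hj⟩ | ⟨a, b, hab⟩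
  · rw [Sym2.eq_iff] at hi
    rcases hi with ⟨hu, hv⟩ | ⟨hu, hv⟩ <;> subst hu <;> subst hv <;>
      simp [f_c] <;> omega
  · rw [Sym2.eq_iff] at hj
    rcases hj with ⟨hu, hv⟩ | ⟨hu, hv⟩ <;> subst hu <;> subst hv <;> simp
  · rw [Sym2.eq_iff] at hab
    rcases hab with ⟨hu, hv⟩ | ⟨hu, hv⟩ <;> subst hu <;> subst hv <;> simp

lemma walk_bound : ∀ {u v : V d m} (p : (G d m F).Walk u v),
    f d m v ≤ f d m u + p.length := by
  intro u v p
  induction p with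
  | nil => simp
  | cons h q ih =>
    rw [adj_iff] at h
    have := lipschitz h.1
    simp only [SimpleGraph.Walk.length_cons]
    omega

variable (hF : ∀ e ∈ F, ¬ e.IsDiag)

include hF in
lemma not_diag_S : ∀ e ∈ S d m F, ¬ e.IsDiag := by
  intro e he
  simp only [S, Finset.mem_union, pathE, starE, bE, Finset.mem_image,
    Finset.mem_univ, true_and] at he
  rcases he with (⟨i, hi⟩ | ⟨j, hj⟩) | ⟨e', he', hmap⟩
  · subst hi
    rw [Sym2.mk_isDiag_iff]
    intro hh
    have := c_injective d m hh
    have : i.castSucc.val = i.succ.val := by rw [this]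
    simp at this
  · subst hj
    rw [Sym2.mk_isDiag_iff]
    simp [bv]
  · subst hmap
    rw [Sym2.isDiag_map (bv_injective d m)]
    exact hF e' he'


lemma adj_c (i : Fin d) : (G d m F).Adj (c d m i.castSucc) (c d m i.succ) := by
  rw [adj_iff]
  constructor
  · apply Finset.mem_union_left
    apply Finset.mem_union_left
    exact Finset.mem_image_of_mem _ (Finset.mem_univ i)
  · intro hh
    have h2 := congrArg (f d m) hh
    simp [f_c] at h2

lemma adj_sb (j : Fin m) : (G d m F).Adj (Sum.inl ()) (bv d m j) := by
  rw [adj_iff]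
  refine ⟨?_, by simp [bv]⟩
  apply Finset.mem_union_left
  apply Finset.mem_union_right
  exact Finset.mem_image_of_mem _ (Finset.mem_univ j)

lemma walk_to_c (F : Finset (Sym2 (Fin m))) (k : Fin (d + 1)) :
    ∃ p : (G d m F).Walk (Sum.inl ()) (c d m k), p.length = k.val := by
  induction k using Fin.induction with
  | zero => exact ⟨SimpleGraph.Walk.nil.copy rfl (c_zero d m).symm, by simp⟩
  | succ i ih =>
    obtain ⟨p, hp⟩ := ih
    exact ⟨p.concat (adj_c i), by simp [hp]⟩

lemma dist_c (k : Fin (d + 1)) : (G d m F).dist (Sum.inl ()) (c d m k) ≤ k.val := by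
  obtain ⟨p, hp⟩ := walk_to_c F k
  exact hp ▸ SimpleGraph.dist_le p

lemma dist_b (j : Fin m) : (G d m F).dist (Sum.inl ()) (bv d m j) ≤ 1 := by
  have h := SimpleGraph.dist_le (SimpleGraph.Walk.cons (adj_sb (d := d) (F := F) j) SimpleGraph.Walk.nil)
  simpa using h

lemma connected (hd : 0 < d) : (G d m F).Connected := by
  rw [SimpleGraph.connected_iff_exists_forall_reachable]
  refine ⟨Sum.inl (), fun w => ?_⟩
  rcases w with _ | i | j
  · rfl
  · obtain ⟨p, _⟩ := walk_to_c (d := d) (m := m) F i.succ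
    rw [c_succ] at p
    exact ⟨p⟩
  · exact (adj_sb (F := F) j).reachable

lemma dist_last (hd : 0 < d) :
    (G d m F).dist (Sum.inl ()) (c d m (Fin.last d)) = d := by
  refine le_antisymm (by simpa using dist_c (F := F) (Fin.last d)) ?_
  obtain ⟨p, hp⟩ :=
    ((connected (F := F) hd) (Sum.inl ()) (c d m (Fin.last d))).exists_walk_length_eq_dist
  have := walk_bound p
  simp [f_c] at this
  omega

section cards

lemma pathE_card : (pathE d m).card = d := by
  rw [pathE, Finset.card_image_of_injective _ ?_, Finset.card_univ, Fintype.card_fin]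
  intro i j hij
  rw [Sym2.eq_iff] at hij
  rcases hij with ⟨h1, h2⟩ | ⟨h1, h2⟩
  · have := c_injective d m h2
    simpa [Fin.succ_inj] using this
  · have e1 := congrArg (f d m) h1
    have e2 := congrArg (f d m) h2
    simp [f_c] at e1 e2
    omega

lemma starE_card : (starE d m).card = m := by
  rw [starE, Finset.card_image_of_injective _ ?_, Finset.card_univ, Fintype.card_fin]
  intro i j hij
  rw [Sym2.eq_iff] at hij
  rcases hij with ⟨h1, h2⟩ | ⟨h1, h2⟩
  · simpa using h2
  · simp at h1

lemma bE_card (F : Finset (Sym2 (Fin m))) : (bE d m F).card = F.card :=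
  Finset.card_image_of_injective _ (Sym2.map.injective (bv_injective d m))

lemma disj1 : Disjoint (pathE d m) (starE d m) := by
  rw [Finset.disjoint_left]
  intro e he1 he2
  simp only [pathE, starE, Finset.mem_image, Finset.mem_univ, true_and] at he1 he2
  obtain ⟨i, hi⟩ := he1
  obtain ⟨j, hj⟩ := he2
  rw [← hj, Sym2.eq_iff] at hi
  rcases hi with ⟨h1, h2⟩ | ⟨h1, h2⟩
  · rw [c_succ] at h2; simp [bv] at h2
  · rw [c_succ] at h2; simp at h2

lemma disj2 : Disjoint (pathE d m ∪ starE d m) (bE d m F) := by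
  rw [Finset.disjoint_left]
  intro e he1 he2
  simp only [bE, Finset.mem_image] at he2
  obtain ⟨e', he', hmap⟩ := he2
  induction e' using Sym2.ind with
  | _ a b =>
    rw [Sym2.map_pair_eq] at hmap
    simp only [Finset.mem_union, pathE, starE, Finset.mem_image, Finset.mem_univ,
      true_and] at he1
    rcases he1 with ⟨i, hi⟩ | ⟨j, hj⟩
    · rw [← hmap, Sym2.eq_iff] at hi
      rcases hi with ⟨h1, h2⟩ | ⟨h1, h2⟩ <;> rw [c_succ] at h2 <;> simp [bv] at h2
    · rw [← hmap, Sym2.eq_iff] at hj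
      rcases hj with ⟨h1, h2⟩ | ⟨h1, h2⟩ <;> simp [bv] at h1 h2

lemma S_card (F : Finset (Sym2 (Fin m))) : (S d m F).card = d + m + F.card := by
  rw [S, Finset.card_union_of_disjoint disj2, Finset.card_union_of_disjoint disj1,
    pathE_card, starE_card, bE_card]

include hF in
lemma edgeSet_eq : (G d m F).edgeSet = ↑(S d m F) := by
  rw [G, SimpleGraph.edgeSet_fromEdgeSet]
  ext e
  simp only [Set.mem_diff, Set.mem_setOf_eq, Finset.mem_coe]
  exact ⟨fun h => h.1, fun h => ⟨h, not_diag_S hF e h⟩⟩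

include hF in
lemma ncard_edgeSet : (G d m F).edgeSet.ncard = d + m + F.card := by
  rw [edgeSet_eq hF, Set.ncard_coe_finset, S_card]

end cards

end Stmt0Aux

open Stmt0Aux in
/-- For all integers `d > 1`, `m ≥ d` and `x` with `m ≤ x ≤ m²`, there exists a finite
connected simple graph `G` with a distinguished vertex `s` such that `G` has exactly
`1 + d + m` vertices and exactly `d + m + min x (m(m-1)/2)` edges, the eccentricity of
`s` in `G` equals `d`, and the ball `B_d(G,s)` equals `G`: every vertex is at distance
at most `d` from `s` and every edge has an endpoint at distance strictly less than `d`
from `s`. -/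
theorem stmt0 (d m x : ℕ) (hd : 1 < d) (hm : d ≤ m) (hx1 : m ≤ x) (hx2 : x ≤ m ^ 2) :
    ∃ (V : Type) (_ : Fintype V) (G : SimpleGraph V) (s : V),
      G.Connected ∧
      Fintype.card V = 1 + d + m ∧
      G.edgeSet.ncard = d + m + min x (m * (m - 1) / 2) ∧
      (∀ w : V, G.dist s w ≤ d) ∧
      (∃ w : V, G.dist s w = d) ∧
      (∀ u v : V, G.Adj u v → G.dist s u < d ∨ G.dist s v < d) := by
  classical
  set k := min x (m * (m - 1) / 2) with hk
  have hk2 : k ≤ ((⊤ : SimpleGraph (Fin m)).edgeFinset).card := by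
    rw [SimpleGraph.card_edgeFinset_top_eq_card_choose_two, Fintype.card_fin,
      Nat.choose_two_right]
    exact min_le_right _ _
  obtain ⟨F, hFsub, hFcard⟩ := Finset.exists_subset_card_eq hk2
  have hF : ∀ e ∈ F, ¬ e.IsDiag := fun e he =>
    ((⊤ : SimpleGraph (Fin m)).not_isDiag_of_mem_edgeSet
      (SimpleGraph.mem_edgeFinset.mp (hFsub he)))
  have hd0 : 0 < d := by omega
  refine ⟨V d m, inferInstance, G d m F, Sum.inl (), connected hd0, ?_, ?_, ?_, ?_, ?_⟩
  · simp [V]; omega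
  · rw [ncard_edgeSet hF, hFcard]
  · intro w
    rcases w with _ | i | j
    · simp [SimpleGraph.dist_self]
    · have := dist_c (F := F) i.succ
      rw [c_succ] at this
      have : (i : ℕ) + 1 ≤ d := i.2
      omega
    · have := dist_b (d := d) (F := F) j
      rw [bv] at this
      omega
  · refine ⟨c d m (Fin.last d), dist_last hd0⟩
  · intro u v huv
    rw [adj_iff] at huv
    rcases mem_S_cases huv.1 with ⟨i, hi⟩ | ⟨j, hj⟩ | ⟨a, b, hab⟩
    · rw [Sym2.eq_iff] at hi
      have hcs : (G d m F).dist (Sum.inl ()) (c d m i.castSucc) < d := by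
        have := dist_c (F := F) i.castSucc
        have : (i.castSucc : ℕ) < d := by simpa using i.2
        omega
      rcases hi with ⟨h1, h2⟩ | ⟨h1, h2⟩
      · exact Or.inl (h1 ▸ hcs)
      · exact Or.inr (h2 ▸ hcs)
    · rw [Sym2.eq_iff] at hj
      rcases hj with ⟨h1, h2⟩ | ⟨h1, h2⟩
      · exact Or.inl (by rw [← h1, SimpleGraph.dist_self]; omega)
      · exact Or.inr (by rw [← h2, SimpleGraph.dist_self]; omega)
    · rw [Sym2.eq_iff] at hab
      rcases hab with ⟨h1, h2⟩ | ⟨h1, h2⟩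
      · exact Or.inl (by rw [h1]; have := dist_b (d := d) (F := F) a; omega)
      · exact Or.inr (by rw [h2]; have := dist_b (d := d) (F := F) a; omega)
end

section
/- Let G be a connected simple graph, s a vertex, and u, v two adjacent vertices of G, each adjacent to s and both different from s. Let G' be obtained from G by subdividing the edge {u,v}: delete the edge {u,v} and add a new vertex z together with the edges {u,z} and {z,v}. Then: (a) every vertex w of G satisfies dist_{G'}(s,w) = dist_G(s,w); (b) dist_{G'}(s,z) = 2; (c) if the eccentricity of s in G equals d for some integer d ≥ 2, then the eccentricity of s in G' equals d and the number of edges of the ball B_d(G',s) equals the number of edges of the ball B_d(G,s) plus 1. -/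
/-- The set of edges of the ball `B_k(G,s)`: the edges of `G` having at least one
endpoint at distance strictly less than `k` from `s`. -/
def ballEdgeSet {V : Type*} (G : SimpleGraph V) (s : V) (k : ℕ) : Set (Sym2 V) :=
  {e | e ∈ G.edgeSet ∧ ∃ a ∈ e, G.dist s a < k}

section aux
variable {V : Type} (G : SimpleGraph V) (u v : V)
  (G' : SimpleGraph (V ⊕ Unit))
  (hadj : ∀ a b : V, G'.Adj (Sum.inl a) (Sum.inl b) ↔
      (G.Adj a b ∧ ¬(a = u ∧ b = v) ∧ ¬(a = v ∧ b = u)))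
  (hz : ∀ a : V, G'.Adj (Sum.inl a) (Sum.inr ()) ↔ (a = u ∨ a = v))
  (huv : G.Adj u v)

include hadj hz huv in
/-- Project a walk in `G'` ending at an old vertex to a walk in `G` of at most the
same length; `z` projects to `u`. -/
theorem projectWalk {x : V ⊕ Unit} {y : V ⊕ Unit} (p : G'.Walk x y) :
    ∀ w : V, y = Sum.inl w →
      ∃ q : G.Walk (Sum.elim id (fun _ => u) x) w, q.length ≤ p.length := by
  induction p with
  | nil =>
    intro w hw
    subst hw
    exact ⟨SimpleGraph.Walk.nil, le_refl _⟩
  | @cons x c y h p ih =>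
    intro w hw
    obtain ⟨q, hq⟩ := ih w hw
    cases x with
    | inl a =>
      cases c with
      | inl b =>
        have hab : G.Adj a b := ((hadj a b).mp h).1
        exact ⟨SimpleGraph.Walk.cons hab q, by exact Nat.succ_le_succ hq⟩
      | inr t =>
        cases t
        rcases (hz a).mp h with rfl | rfl
        · exact ⟨q, le_trans hq (Nat.le_succ _)⟩
        · exact ⟨SimpleGraph.Walk.cons huv.symm q, by exact Nat.succ_le_succ hq⟩
    | inr t =>
      cases t
      cases c with
      | inl b =>
        rcases (hz b).mp h.symm with rfl | rfl
        · exact ⟨q, le_trans hq (Nat.le_succ _)⟩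
        · exact ⟨SimpleGraph.Walk.cons huv q, by exact Nat.succ_le_succ hq⟩
      | inr t' =>
        cases t'
        exact absurd rfl h.ne

end aux

section aux2
variable {V : Type} (G : SimpleGraph V) (u v : V)
  (G' : SimpleGraph (V ⊕ Unit))
  (hadj : ∀ a b : V, G'.Adj (Sum.inl a) (Sum.inl b) ↔
      (G.Adj a b ∧ ¬(a = u ∧ b = v) ∧ ¬(a = v ∧ b = u)))
  (hconn : G.Connected) (s : V) (hsu : G.Adj s u) (hsv : G.Adj s v)
  (hus : u ≠ s) (hvs : v ≠ s)

include hadj hconn hsu hsv hus hvs in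
/-- Lift a geodesic in `G` from `s` to a walk in `G'` of at most the same length. -/
theorem liftWalk : ∀ n : ℕ, ∀ w : V, G.dist s w = n →
    ∃ p : G'.Walk (Sum.inl s) (Sum.inl w), p.length ≤ n := by
  have hdu : G.dist s u = 1 := SimpleGraph.dist_eq_one_iff_adj.mpr hsu
  have hdv : G.dist s v = 1 := SimpleGraph.dist_eq_one_iff_adj.mpr hsv
  intro n
  induction n using Nat.strong_induction_on with
  | _ n ih =>
  intro w hw
  by_cases hws : w = s
  · subst hws
    exact ⟨SimpleGraph.Walk.nil, Nat.zero_le _⟩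
  · have hr : G.Reachable s w := hconn s w
    have hpos : 0 < G.dist s w := hr.pos_dist_of_ne (fun h => hws h.symm)
    obtain ⟨p, hp⟩ := hr.exists_walk_length_eq_dist
    have hnn : ¬ p.reverse.Nil := by
      rw [SimpleGraph.Walk.not_nil_iff_lt_length, SimpleGraph.Walk.length_reverse, hp]
      exact hpos
    obtain ⟨x, hwx, q, hq⟩ := SimpleGraph.Walk.not_nil_iff.mp hnn
    have hlen : q.length + 1 = G.dist s w := by
      have := congrArg SimpleGraph.Walk.length hq
      rw [SimpleGraph.Walk.length_reverse, hp] at this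
      simp only [SimpleGraph.Walk.length_cons] at this
      omega
    have hdx_le : G.dist s x ≤ q.length := by
      have := SimpleGraph.dist_le q.reverse
      simpa using this
    have hdw_le : G.dist s w ≤ G.dist s x + 1 := by
      calc G.dist s w ≤ G.dist s x + G.dist x w := hconn.dist_triangle
        _ ≤ G.dist s x + 1 := by
            have : G.dist x w ≤ 1 := by
              simpa using SimpleGraph.dist_le hwx.symm.toWalk
            omega
    have hdx : G.dist s x = G.dist s w - 1 := by omega
    obtain ⟨p', hp'⟩ := ih (n-1) (by omega) x (by omega)
    have hne : ¬(x = u ∧ w = v) ∧ ¬(x = v ∧ w = u) := by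
      constructor
      · rintro ⟨rfl, rfl⟩; omega
      · rintro ⟨rfl, rfl⟩; omega
    have h' : G'.Adj (Sum.inl x) (Sum.inl w) := (hadj x w).mpr ⟨hwx.symm, hne.1, hne.2⟩
    refine ⟨p'.concat h', ?_⟩
    rw [SimpleGraph.Walk.length_concat]
    omega

end aux2

/-- Subdividing an edge `{u,v}` (with `u,v ≠ s` both adjacent to `s` and to each other)
by a midpoint `z` does not change distances from `s` to old vertices, puts `z` at
distance `2` from `s`, and if the eccentricity of `s` was `d ≥ 2` then it stays `d`
while the number of edges of the ball `B_d` increases by exactly `1`. -/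
theorem stmt1 {V : Type} [Fintype V] (G : SimpleGraph V) (hconn : G.Connected)
    (s u v : V) (huv : G.Adj u v) (hsu : G.Adj s u) (hsv : G.Adj s v)
    (hus : u ≠ s) (hvs : v ≠ s)
    (G' : SimpleGraph (V ⊕ Unit))
    (hadj : ∀ a b : V, G'.Adj (Sum.inl a) (Sum.inl b) ↔
      (G.Adj a b ∧ ¬(a = u ∧ b = v) ∧ ¬(a = v ∧ b = u)))
    (hz : ∀ a : V, G'.Adj (Sum.inl a) (Sum.inr ()) ↔ (a = u ∨ a = v)) :
    (∀ w : V, G'.dist (Sum.inl s) (Sum.inl w) = G.dist s w) ∧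
    G'.dist (Sum.inl s) (Sum.inr ()) = 2 ∧
    (∀ d : ℕ, 2 ≤ d →
      ((∀ w : V, G.dist s w ≤ d) ∧ (∃ w : V, G.dist s w = d)) →
      (((∀ w : V ⊕ Unit, G'.dist (Sum.inl s) w ≤ d) ∧
        (∃ w : V ⊕ Unit, G'.dist (Sum.inl s) w = d)) ∧
       (ballEdgeSet G' (Sum.inl s) d).ncard = (ballEdgeSet G s d).ncard + 1)) := by
  have hdu : G.dist s u = 1 := SimpleGraph.dist_eq_one_iff_adj.mpr hsu
  have hdv : G.dist s v = 1 := SimpleGraph.dist_eq_one_iff_adj.mpr hsv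
  have hA : ∀ w : V, G'.dist (Sum.inl s) (Sum.inl w) = G.dist s w := by
    intro w
    obtain ⟨p, hp⟩ := liftWalk G u v G' hadj hconn s hsu hsv hus hvs (G.dist s w) w rfl
    have hle : G'.dist (Sum.inl s) (Sum.inl w) ≤ G.dist s w :=
      le_trans (SimpleGraph.dist_le p) hp
    have hr' : G'.Reachable (Sum.inl s) (Sum.inl w) := ⟨p⟩
    obtain ⟨p', hp'⟩ := hr'.exists_walk_length_eq_dist
    obtain ⟨q, hq⟩ := projectWalk G u v G' hadj hz huv p' w rfl
    have hge := le_trans (SimpleGraph.dist_le q) hq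
    simp only [Sum.elim_inl, id_eq] at hge
    omega
  have hB : G'.dist (Sum.inl s) (Sum.inr ()) = 2 := by
    have h1 : G'.Adj (Sum.inl s) (Sum.inl u) := by
      refine (hadj s u).mpr ⟨hsu, ?_, ?_⟩
      · rintro ⟨rfl, rfl⟩; exact hus rfl
      · rintro ⟨rfl, -⟩; exact hvs rfl
    have h2 : G'.Adj (Sum.inl u) (Sum.inr ()) := (hz u).mpr (Or.inl rfl)
    have hle : G'.dist (Sum.inl s) (Sum.inr ()) ≤ 2 := by
      simpa using SimpleGraph.dist_le (SimpleGraph.Walk.cons h1 (SimpleGraph.Walk.cons h2 SimpleGraph.Walk.nil))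
    have hr : G'.Reachable (Sum.inl s) (Sum.inr ()) :=
      ⟨SimpleGraph.Walk.cons h1 (SimpleGraph.Walk.cons h2 SimpleGraph.Walk.nil)⟩
    have hne0 : G'.dist (Sum.inl s) (Sum.inr ()) ≠ 0 := by
      have := hr.pos_dist_of_ne (by simp)
      omega
    have hne1 : G'.dist (Sum.inl s) (Sum.inr ()) ≠ 1 := by
      intro h
      have := SimpleGraph.dist_eq_one_iff_adj.mp h
      rcases (hz s).mp this with h' | h'
      · exact hus h'.symm
      · exact hvs h'.symm
    omega
  refine ⟨hA, hB, ?_⟩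
  rintro d hd ⟨hall, w0, hw0⟩
  refine ⟨⟨?_, ⟨Sum.inl w0, by rw [hA]; exact hw0⟩⟩, ?_⟩
  · intro w
    cases w with
    | inl a => rw [hA]; exact hall a
    | inr t => cases t; rw [hB]; exact hd
  · -- edge count
    have key : ballEdgeSet G' (Sum.inl s) d =
        (Sym2.map Sum.inl '' (ballEdgeSet G s d \ {s(u, v)})) ∪
          {s(Sum.inl u, Sum.inr ()), s(Sum.inl v, Sum.inr ())} := by
      ext e
      induction e using Sym2.ind with
      | _ x y =>
      constructor
      · rintro ⟨he, a, ha, hda⟩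
        rw [SimpleGraph.mem_edgeSet] at he
        cases x with
        | inl a' =>
          cases y with
          | inl b' =>
            obtain ⟨hab, h1, h2⟩ := (hadj a' b').mp he
            left
            refine ⟨s(a', b'), ⟨⟨(SimpleGraph.mem_edgeSet _).mpr hab, ?_⟩, ?_⟩, by simp⟩
            · rcases Sym2.mem_iff.mp ha with rfl | rfl
              · exact ⟨a', by simp, by rw [← hA]; exact hda⟩
              · exact ⟨b', by simp, by rw [← hA]; exact hda⟩
            · simp only [Set.mem_singleton_iff, Sym2.eq_iff]
              tauto
          | inr t =>
            cases t
            right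
            rcases (hz a').mp he with rfl | rfl
            · simp
            · simp
        | inr t =>
          cases t
          cases y with
          | inl b' =>
            right
            rcases (hz b').mp he.symm with rfl | rfl
            · rw [Sym2.eq_swap]; simp
            · rw [Sym2.eq_swap]; simp
          | inr t' =>
            cases t'
            exact absurd rfl he.ne
      · rintro (⟨e0, ⟨⟨he0, a0, ha0, hda0⟩, hne0⟩, hmap⟩ | h)
        · induction e0 using Sym2.ind with
          | _ a b =>
          rw [SimpleGraph.mem_edgeSet] at he0
          simp only [Set.mem_singleton_iff, Sym2.eq_iff] at hne0
          have hadj' : G'.Adj (Sum.inl a) (Sum.inl b) :=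
            (hadj a b).mpr ⟨he0, by tauto, by tauto⟩
          refine ⟨?_, Sum.inl a0, ?_, by rw [hA]; exact hda0⟩
          · rw [← hmap]; simpa [SimpleGraph.mem_edgeSet] using hadj'
          · rw [← hmap]
            rcases Sym2.mem_iff.mp ha0 with rfl | rfl
            · simp
            · simp
        · rw [Set.mem_insert_iff, Set.mem_singleton_iff] at h
          rcases h with h | h <;> rw [h]
          · exact ⟨(SimpleGraph.mem_edgeSet _).mpr ((hz u).mpr (Or.inl rfl)),
              Sum.inl u, by simp, by rw [hA, hdu]; omega⟩
          · exact ⟨(SimpleGraph.mem_edgeSet _).mpr ((hz v).mpr (Or.inr rfl)),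
              Sum.inl v, by simp, by rw [hA, hdv]; omega⟩
    have hmemuv : s(u, v) ∈ ballEdgeSet G s d :=
      ⟨(SimpleGraph.mem_edgeSet _).mpr huv, u, by simp, by rw [hdu]; omega⟩
    have hdisj : Disjoint (Sym2.map Sum.inl '' (ballEdgeSet G s d \ {s(u, v)}))
        ({s(Sum.inl u, Sum.inr ()), s(Sum.inl v, Sum.inr ())} : Set (Sym2 (V ⊕ Unit))) := by
      rw [Set.disjoint_left]
      rintro e ⟨e0, -, rfl⟩
      induction e0 using Sym2.ind with
      | _ a b =>
      simp [Sym2.eq_iff]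
    have hnepair : s(Sum.inl u, (Sum.inr () : V ⊕ Unit)) ≠ s(Sum.inl v, Sum.inr ()) := by
      simp [Sym2.eq_iff, huv.ne]
    rw [key, Set.ncard_union_eq hdisj (Set.toFinite _) (Set.toFinite _),
      Set.ncard_image_of_injective _ (Sym2.map.injective Sum.inl_injective),
      Set.ncard_pair hnepair]
    have := Set.ncard_diff_singleton_add_one hmemuv (Set.toFinite _)
    omega
end

section
/- Let G be a connected simple graph, s a vertex, f ≥ 0 and l ≥ 1 integers, and let M be a subgraph of G that contains (vertex- and edge-wise) the ball B_f(G,s). Suppose that for every vertex w of G with dist_G(s,w) = f and every vertex u of M that is incomplete in M, there is no path of length at most l from w to u inside M. Then M contains (vertex- and edge-wise) the ball B_{f+l}(G,s). -/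
/-- The ball `B_k(G,s)` as a subgraph of `G`: its vertices are the vertices at distance
at most `k` from `s`, and its edges are the edges of `G` having at least one endpoint at
distance strictly less than `k` from `s`. -/
def ballSubgraph {V : Type*} (G : SimpleGraph V) (s : V) (k : ℕ) : G.Subgraph where
  verts := {v | G.dist s v ≤ k}
  Adj a b := G.Adj a b ∧ (G.dist s a < k ∨ G.dist s b < k) ∧ G.dist s a ≤ k ∧ G.dist s b ≤ k
  adj_sub h := h.1
  edge_vert h := h.2.2.1
  symm := ⟨fun a b h => ⟨h.1.symm, h.2.1.symm, h.2.2.2, h.2.2.1⟩⟩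

/-- Let `M` be a subgraph of a connected simple graph `G` containing the ball `B_f(G,s)`,
with `l ≥ 1`. If for every vertex `w` at distance exactly `f` from `s` and every vertex
`u` of `M` that is incomplete in `M`, there is no walk of length at most `l` from `w` to
`u` inside `M`, then `M` contains the ball `B_{f+l}(G,s)`. -/
theorem stmt5 {V : Type} (G : SimpleGraph V) (hconn : G.Connected) (s : V)
    (f l : ℕ) (hl : 1 ≤ l) (M : G.Subgraph) (hball : ballSubgraph G s f ≤ M)
    (hfar : ∀ (w : V) (hw : w ∈ M.verts), G.dist s w = f →
      ∀ (u : V) (hu : u ∈ M.verts), (∃ v : V, G.Adj u v ∧ ¬ M.Adj u v) →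
      ∀ p : M.coe.Walk ⟨w, hw⟩ ⟨u, hu⟩, l < p.length) :
    ballSubgraph G s (f + l) ≤ M := by
  classical
  -- adjacent vertices are at distance ≤ 1
  have hadj_dist : ∀ {a b : V}, G.Adj a b → G.dist a b ≤ 1 := by
    intro a b h
    simpa using SimpleGraph.dist_le h.toWalk
  -- predecessor on a geodesic
  have pred : ∀ (n : ℕ) (v : V), G.dist s v = n + 1 → ∃ u, G.Adj u v ∧ G.dist s u = n := by
    intro n v hv
    obtain ⟨p, hp⟩ := hconn.exists_walk_length_eq_dist s v
    rw [hv] at hp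
    cases p with
    | nil => simp at hp
    | cons h q =>
      obtain ⟨x, r, h', hc⟩ := SimpleGraph.Walk.exists_cons_eq_concat h q
      refine ⟨x, h', ?_⟩
      have hlen : r.length = n := by
        have := congrArg SimpleGraph.Walk.length hc
        rw [SimpleGraph.Walk.length_concat] at this
        omega
      have h1 : G.dist s x ≤ n := hlen ▸ SimpleGraph.dist_le r
      have h2 : G.dist s v ≤ G.dist s x + G.dist x v := hconn.dist_triangle
      have h3 : G.dist x v ≤ 1 := hadj_dist h'
      omega
  -- key: a vertex reachable within M from a distance-f vertex by a short walk is complete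
  have key : ∀ (x : V) (hx : x ∈ M.verts) (w : V) (hw : w ∈ M.verts),
      G.dist s w = f → ∀ (p : M.coe.Walk ⟨w, hw⟩ ⟨x, hx⟩), p.length < l →
      ∀ y, G.Adj x y → M.Adj x y := by
    intro x hx w hw hwf p hp y hxy
    by_contra hmn
    exact absurd (hfar w hw hwf x hx ⟨y, hxy, hmn⟩ p) (by omega)
  -- main claim
  have claim : ∀ j, j ≤ l → ∀ v, G.dist s v = f + j →
      ∃ (hv : v ∈ M.verts) (w : V) (hw : w ∈ M.verts) (_ : G.dist s w = f)
        (p : M.coe.Walk ⟨w, hw⟩ ⟨v, hv⟩), p.length = j := by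
    intro j
    induction j with
    | zero =>
      intro _ v hv
      have hv' : v ∈ M.verts := hball.1 (by simp [ballSubgraph]; omega)
      exact ⟨hv', v, hv', by simpa using hv, SimpleGraph.Walk.nil, rfl⟩
    | succ j ih =>
      intro hjl v hv
      obtain ⟨u, hadj, hu⟩ := pred (f + j) v (by omega)
      obtain ⟨hu', w, hw, hwf, p, hp⟩ := ih (by omega) u hu
      have hM : M.Adj u v := key u hu' w hw hwf p (by omega) v hadj
      have hv' : v ∈ M.verts := hM.snd_mem
      refine ⟨hv', w, hw, hwf, p.concat (by exact hM), ?_⟩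
      exact (SimpleGraph.Walk.length_concat p _).trans (congrArg (· + 1) hp)
  -- edge helper
  have edgeM : ∀ a b, G.Adj a b → G.dist s a < f + l → G.dist s b ≤ f + l → M.Adj a b := by
    intro a b hab ha hb
    by_cases hf : G.dist s a < f
    · have hb' : G.dist s b ≤ f := by
        have h2 : G.dist s b ≤ G.dist s a + G.dist a b := hconn.dist_triangle
        have h3 : G.dist a b ≤ 1 := hadj_dist hab
        omega
      exact hball.2 ⟨hab, Or.inl hf, by omega, hb'⟩
    · push_neg at hf
      set j := G.dist s a - f with hj
      obtain ⟨hu', w, hw, hwf, p, hp⟩ := claim j (by omega) a (by omega)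
      exact key a hu' w hw hwf p (by omega) b hab
  refine ⟨?_, ?_⟩
  · intro v hv
    simp only [ballSubgraph, Set.mem_setOf_eq] at hv
    by_cases hf : G.dist s v ≤ f
    · exact hball.1 (by simp [ballSubgraph]; omega)
    · push_neg at hf
      set j := G.dist s v - f with hj
      obtain ⟨hv', _⟩ := claim j (by omega) v (by omega)
      exact hv'
  · intro a b hab
    obtain ⟨hadj, hlt, ha, hb⟩ := hab
    rcases hlt with h | h
    · exact edgeM a b hadj h hb
    · exact (edgeM b a hadj.symm h ha).symm
end

section
/- Let l ≥ 2 be an integer and let T be a finite tree rooted at a vertex v. Set D = max(1, ⌊l/4⌋), and let S be the set of vertices u of T at depth exactly D whose subtree has height h(u) satisfying h(u) + 1 ≥ ⌊l/4⌋. Let T' be the tree obtained from T by deleting, for each u ∈ S, all vertices of the subtree of T rooted at u (and all incident edges). Then T' is a tree containing v, and every vertex of T' is at distance at most ⌊l/2⌋ − 1 from v in T'. -/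
/-- The vertex set of the subtree of the tree `T` (rooted at `v`) rooted at `u`:
the vertices `w` such that `u` lies on the unique path of `T` from `v` to `w`. -/
def subtreeVerts {V : Type*} (T : SimpleGraph V) (v u : V) : Set V :=
  {w | T.dist v w = T.dist v u + T.dist u w}

/-- The set of vertices `u` at depth exactly `max 1 ⌊l/4⌋` whose rooted subtree has
height `h(u)` with `h(u) + 1 ≥ ⌊l/4⌋`: these subtrees are removed by `Prune(l)`. -/
def pruneSet {V : Type*} (T : SimpleGraph V) (v : V) (l : ℕ) : Set V :=
  {u | T.dist v u = max 1 (l / 4) ∧ ∃ w ∈ subtreeVerts T v u, l / 4 ≤ T.dist u w + 1}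

/-- The vertices kept by `Prune(l)`: those in none of the removed subtrees. -/
def keptVerts {V : Type*} (T : SimpleGraph V) (v : V) (l : ℕ) : Set V :=
  {w | ∀ u ∈ pruneSet T v l, w ∉ subtreeVerts T v u}

open SimpleGraph

private lemma walk_split {V : Type*} {G : SimpleGraph V} :
    ∀ {v w : V} (p : G.Walk v w) (k : ℕ), k ≤ p.length →
    ∃ (u : V) (q : G.Walk v u) (r : G.Walk u w),
      q.length = k ∧ q.length + r.length = p.length := by
  intro v w p
  induction p with
  | nil =>
    intro k hk
    obtain rfl := Nat.le_zero.mp hk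
    exact ⟨_, .nil, .nil, rfl, rfl⟩
  | cons h p ih =>
    intro k hk
    cases k with
    | zero => exact ⟨_, .nil, .cons h p, rfl, by simp⟩
    | succ k =>
      obtain ⟨u, q, r, hq, hqr⟩ := ih k (by simpa using hk)
      exact ⟨u, q.cons h, r, by simp [hq], by simp only [Walk.length_cons]; omega⟩

private lemma exists_mid {V : Type*} {G : SimpleGraph V} (hc : G.Connected) (v w : V) (k : ℕ)
    (hk : k ≤ G.dist v w) :
    ∃ u, G.dist v u = k ∧ G.dist v w = G.dist v u + G.dist u w := by
  obtain ⟨p, hp⟩ := (hc v w).exists_walk_length_eq_dist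
  obtain ⟨u, q, r, hq, hqr⟩ := walk_split p k (by omega)
  have h1 := SimpleGraph.dist_le q
  have h2 := SimpleGraph.dist_le r
  have h3 := hc.dist_triangle (u := v) (v := u) (w := w)
  exact ⟨u, by omega, by omega⟩

private lemma mem_support_geodesic {V : Type*} {G : SimpleGraph V} (hc : G.Connected)
    {v w x : V} (p : G.Walk v w) (hp : p.length = G.dist v w) (hx : x ∈ p.support) :
    G.dist v w = G.dist v x + G.dist x w := by
  obtain ⟨q, r, hqr⟩ := Walk.mem_support_iff_exists_append.mp hx
  have h1 := SimpleGraph.dist_le q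
  have h2 := SimpleGraph.dist_le r
  have h3 := hc.dist_triangle (u := v) (v := x) (w := w)
  have h4 : q.length + r.length = p.length := by
    rw [hqr, Walk.length_append]
  omega

private lemma kept_of_between {V : Type*} {T : SimpleGraph V} (hc : T.Connected)
    {v w x : V} {l : ℕ} (hw : w ∈ keptVerts T v l)
    (hx : T.dist v w = T.dist v x + T.dist x w) :
    x ∈ keptVerts T v l := by
  intro u hu hxu
  apply hw u hu
  have hxu' : T.dist v x = T.dist v u + T.dist u x := hxu
  have t1 := hc.dist_triangle (u := u) (v := x) (w := w)
  have t2 := hc.dist_triangle (u := v) (v := u) (w := w)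
  show T.dist v w = T.dist v u + T.dist u w
  omega

private lemma walk_induce {V : Type*} {G : SimpleGraph V} {s : Set V} :
    ∀ {a b : V} (p : G.Walk a b), (∀ x ∈ p.support, x ∈ s) → ∀ (ha : a ∈ s) (hb : b ∈ s),
    ∃ q : (G.induce s).Walk ⟨a, ha⟩ ⟨b, hb⟩, q.length = p.length := by
  intro a b p
  induction p with
  | nil => exact fun _ ha hb => ⟨.nil, rfl⟩
  | @cons a c b h p ih =>
    intro hs ha hb
    have hcs : c ∈ s := hs c (by simp)
    obtain ⟨q, hq⟩ := ih (fun x hx => hs x (by simp [hx])) hcs hb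
    exact ⟨q.cons (by exact h), by exact congrArg (· + 1) hq⟩

/-- Height guarantee of `Prune(l)`: for `l ≥ 2` and a finite tree `T` rooted at `v`,
after removing the subtree rooted at each vertex `u` of depth exactly `max 1 ⌊l/4⌋`
whose subtree height `h(u)` satisfies `h(u) + 1 ≥ ⌊l/4⌋`, the remaining graph `T'` is a
tree containing `v` in which every vertex is at distance at most `⌊l/2⌋ - 1` from `v`. -/
theorem stmt8 {V : Type} [Fintype V] (T : SimpleGraph V) (hT : T.IsTree) (v : V)
    (l : ℕ) (hl : 2 ≤ l) :
    ∃ hv : v ∈ keptVerts T v l,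
      (T.induce (keptVerts T v l)).IsTree ∧
      ∀ w : keptVerts T v l, (T.induce (keptVerts T v l)).dist ⟨v, hv⟩ w + 1 ≤ l / 2 := by
  have hc := hT.isConnected
  have hv : v ∈ keptVerts T v l := by
    intro u hu hvu
    have h0 : T.dist v v = 0 := SimpleGraph.dist_self
    have h1 : 1 ≤ T.dist v u := hu.1 ▸ le_max_left 1 (l / 4)
    have hvu' : T.dist v v = T.dist v u + T.dist u v := hvu
    omega
  have key : ∀ w (hw : w ∈ keptVerts T v l),
      ∃ q : (T.induce (keptVerts T v l)).Walk ⟨v, hv⟩ ⟨w, hw⟩, q.length = T.dist v w := by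
    intro w hw
    obtain ⟨p, hp⟩ := (hc v w).exists_walk_length_eq_dist
    have hsupp : ∀ x ∈ p.support, x ∈ keptVerts T v l := fun x hx =>
      kept_of_between hc hw (mem_support_geodesic hc p hp hx)
    obtain ⟨q, hq⟩ := walk_induce p hsupp hv hw
    exact ⟨q, hq.trans hp⟩
  refine ⟨hv, ⟨?_, ?_⟩, ?_⟩
  · rw [SimpleGraph.connected_iff]
    refine ⟨fun a b => ?_, ⟨⟨v, hv⟩⟩⟩
    obtain ⟨a, ha⟩ := a; obtain ⟨b, hb⟩ := b
    obtain ⟨qa, -⟩ := key a ha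
    obtain ⟨qb, -⟩ := key b hb
    exact (qa.reverse.append qb).reachable
  · intro a c hcyc
    let f := SimpleGraph.Embedding.induce (G := T) (keptVerts T v l)
    have hinj : Function.Injective ⇑f.toHom := by exact fun a b h => f.injective h
    exact hT.IsAcyclic (c.map f.toHom) (hcyc.map hinj)
  · rintro ⟨w, hw⟩
    have hdle : (T.induce (keptVerts T v l)).dist ⟨v, hv⟩ ⟨w, hw⟩ ≤ T.dist v w := by
      obtain ⟨q, hq⟩ := key w hw
      exact hq ▸ SimpleGraph.dist_le q
    have hD1 : 1 ≤ max 1 (l / 4) := le_max_left _ _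
    have hD2 : l / 4 ≤ max 1 (l / 4) := le_max_right _ _
    have hD3 : max 1 (l / 4) = 1 ∨ max 1 (l / 4) = l / 4 := max_choice _ _
    have hbound : T.dist v w + 1 ≤ l / 2 := by
      by_cases hcase : T.dist v w < max 1 (l / 4)
      · omega
      · obtain ⟨u, hu1, hu2⟩ := exists_mid hc v w (max 1 (l / 4)) (by omega)
        have hmem : w ∈ subtreeVerts T v u := by
          exact hu2
        have hnp : u ∉ pruneSet T v l := fun hup => hw u hup hmem
        have hlt : T.dist u w + 1 < l / 4 := by
          by_contra hge
          exact hnp ⟨hu1, w, hmem, by omega⟩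
        omega
    omega
end

section
/- Let l ≥ 2 be an integer and let T be a finite tree rooted at a vertex v. Set D = max(1, ⌊l/4⌋), and let S be the set of vertices u of T at depth exactly D whose subtree has height h(u) satisfying h(u) + 1 ≥ ⌊l/4⌋. Let T' be the tree obtained from T by deleting, for each u ∈ S, all vertices of the subtree of T rooted at u (and all incident edges). Then for each u ∈ S the subtree of T rooted at u has at least ⌊l/8⌋ edges, and if S is nonempty then T' also has at least ⌊l/8⌋ edges. -/
/-- The edges of `T` having both endpoints in the vertex set `W`. -/
def edgesWithin {V : Type*} (T : SimpleGraph V) (W : Set V) : Set (Sym2 V) :=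
  {e | e ∈ T.edgeSet ∧ ∀ a ∈ e, a ∈ W}

/-- splitting a shortest walk at a support vertex -/
lemma dist_split' {V : Type} (T : SimpleGraph V) (hc : T.Connected) {a b x : V}
    (p : T.Walk a b) (hp : p.length = T.dist a b) (hx : x ∈ p.support) :
    T.dist a x + T.dist x b = T.dist a b := by
  classical
  have h1 : T.dist a x ≤ (p.takeUntil x hx).length := SimpleGraph.dist_le _
  have h2 : T.dist x b ≤ (p.dropUntil x hx).length := SimpleGraph.dist_le _
  have h3 : (p.takeUntil x hx).length + (p.dropUntil x hx).length = p.length := by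
    conv_rhs => rw [← p.take_spec hx]
    rw [SimpleGraph.Walk.length_append]
  have h4 : T.dist a b ≤ T.dist a x + T.dist x b := hc.dist_triangle
  omega

/-- lower bound on edges within a set containing all vertices on a shortest `a`-`b` path -/
lemma dist_le_ncard' {V : Type} [Fintype V] (T : SimpleGraph V) (hc : T.Connected)
    (a b : V) (W : Set V)
    (hW : ∀ x, T.dist a x + T.dist x b = T.dist a b → x ∈ W) :
    T.dist a b ≤ (edgesWithin T W).ncard := by
  classical
  obtain ⟨p, hp⟩ := (hc a b).exists_walk_length_eq_dist
  set q := p.bypass with hq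
  have hqp : q.IsPath := p.bypass_isPath
  have hql : q.length = T.dist a b :=
    le_antisymm (hp ▸ p.length_bypass_le) (SimpleGraph.dist_le q)
  have hsub : ↑q.edges.toFinset ⊆ edgesWithin T W := by
    intro e he
    simp only [List.coe_toFinset, Set.mem_setOf_eq] at he
    refine ⟨q.edges_subset_edgeSet he, ?_⟩
    intro x hxe
    have hxs : x ∈ q.support := by
      induction e using Sym2.ind with
      | _ c d =>
        rcases Sym2.mem_iff.mp hxe with rfl | rfl
        · exact q.fst_mem_support_of_mem_edges he
        · exact q.snd_mem_support_of_mem_edges he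
    exact hW x (dist_split' T hc q hql hxs)
  have hcard : q.edges.toFinset.card = T.dist a b := by
    rw [List.toFinset_card_of_nodup hqp.edges_nodup,
      SimpleGraph.Walk.length_edges, hql]
  calc T.dist a b = (↑q.edges.toFinset : Set (Sym2 V)).ncard := by
        rw [Set.ncard_coe_finset, hcard]
    _ ≤ (edgesWithin T W).ncard := Set.ncard_le_ncard hsub (Set.toFinite _)

/-- Size guarantee of `Prune(l)`: for `l ≥ 2` and a finite tree `T` rooted at `v`, each
removed subtree has at least `⌊l/8⌋` edges, and if some subtree is removed then the
remaining tree `T'` also has at least `⌊l/8⌋` edges. -/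
theorem stmt9 {V : Type} [Fintype V] (T : SimpleGraph V) (hT : T.IsTree) (v : V)
    (l : ℕ) (hl : 2 ≤ l) :
    (∀ u ∈ pruneSet T v l, l / 8 ≤ (edgesWithin T (subtreeVerts T v u)).ncard) ∧
    ((pruneSet T v l).Nonempty → l / 8 ≤ (edgesWithin T (keptVerts T v l)).ncard) := by
  have hc : T.Connected := hT.isConnected
  have h84 : l / 8 = l / 4 / 2 := by omega
  have h842 : 2 * (l / 8) ≤ l / 4 := by rw [h84]; omega
  constructor
  · intro u hu
    obtain ⟨hud, w, hw, hlw⟩ := hu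
    by_cases h8 : l < 8
    · have : l / 8 = 0 := by omega
      simp [this]
    push_neg at h8
    have hb1 : 1 ≤ l / 8 := (Nat.one_le_div_iff (by norm_num)).mpr h8
    have hdw : l / 8 ≤ T.dist u w := by omega
    refine hdw.trans (dist_le_ncard' T hc u w _ ?_)
    intro x hx
    have hw' : T.dist v w = T.dist v u + T.dist u w := hw
    have ht1 : T.dist v x ≤ T.dist v u + T.dist u x := hc.dist_triangle
    have ht2 : T.dist v w ≤ T.dist v x + T.dist x w := hc.dist_triangle
    show T.dist v x = T.dist v u + T.dist u x
    omega
  · rintro ⟨u, hu⟩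
    obtain ⟨hud, -⟩ := hu
    by_cases h8 : l < 8
    · have : l / 8 = 0 := by omega
      simp [this]
    push_neg at h8
    have hb1 : 1 ≤ l / 8 := (Nat.one_le_div_iff (by norm_num)).mpr h8
    set D := max 1 (l / 4) with hD
    have hD1 : 1 ≤ D := le_max_left _ _
    have hDl : l / 4 ≤ D := le_max_right _ _
    have hDeq : D = l / 4 := by
      have : 1 ≤ l / 4 := by omega
      simp [hD, this]
    obtain ⟨r, hr⟩ := (hc v u).exists_walk_length_eq_dist
    have hrnil : ¬ r.reverse.Nil := by
      rw [SimpleGraph.Walk.nil_iff_length_eq, SimpleGraph.Walk.length_reverse, hr, hud]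
      omega
    obtain ⟨y, hadj, q, hqc⟩ := SimpleGraph.Walk.not_nil_iff.mp hrnil
    have hqlen : q.length = D - 1 := by
      have := congrArg SimpleGraph.Walk.length hqc
      rw [SimpleGraph.Walk.length_reverse, hr, hud] at this
      simp only [SimpleGraph.Walk.length_cons] at this
      omega
    have hyd : T.dist v y = D - 1 := by
      have h1 : T.dist v y ≤ D - 1 := by
        have := SimpleGraph.dist_le q.reverse
        rwa [SimpleGraph.Walk.length_reverse, hqlen] at this
      have h2 : T.dist y u ≤ 1 := by
        have := SimpleGraph.dist_le (SimpleGraph.Walk.cons hadj.symm SimpleGraph.Walk.nil)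
        simpa using this
      have h3 : T.dist v u ≤ T.dist v y + T.dist y u := hc.dist_triangle
      omega
    have key : l / 8 ≤ T.dist v y := by omega
    refine key.trans (dist_le_ncard' T hc v y _ ?_)
    intro x hx
    intro u' hu' hxs
    have hu'd : T.dist v u' = D := hu'.1
    have hxs' : T.dist v x = T.dist v u' + T.dist u' x := hxs
    omega
end

section
/- Consider integer sequences (floor_k), (ceil_k), (l_k) for k = 0,…,n satisfying: l_0 = ⌊(ceil_0 − floor_0)/2⌋, and for every k < n either (true step) floor_{k+1} = floor_k + l_k, ceil_{k+1} = ceil_k and l_{k+1} = ⌊(ceil_{k+1} − floor_{k+1})/2⌋, or (false step) floor_{k+1} = floor_k, ceil_{k+1} = floor_k + 2·l_k − 1 and l_{k+1} = ⌊l_k/2⌋; assume moreover l_k ≥ 1 for all k ≤ n. Then for every index i with 1 ≤ i ≤ n, either i ≥ n − 6, or there exists c ∈ {1,2,3} such that 8·l_{i+c} ≤ 7·l_i. -/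
/-- Key claim in the analysis of procedure `Search`: for integer sequences `floor`,
`ceil`, `l` evolving by the dichotomic rule (a "true step" sets
`floor ← floor + l`, `l ← ⌊(ceil - floor)/2⌋`; a "false step" sets
`ceil ← floor + 2l - 1`, `l ← ⌊l/2⌋`), with `l_k ≥ 1` throughout, every index
`1 ≤ i ≤ n` satisfies `i ≥ n - 6` or `8·l_{i+c} ≤ 7·l_i` for some `c ∈ {1,2,3}`. -/
theorem stmt10 (n : ℕ) (floor ceil l : ℕ → ℤ)
    (h0 : l 0 = (ceil 0 - floor 0) / 2)
    (hstep : ∀ k < n,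
      (floor (k + 1) = floor k + l k ∧ ceil (k + 1) = ceil k ∧
        l (k + 1) = (ceil (k + 1) - floor (k + 1)) / 2) ∨
      (floor (k + 1) = floor k ∧ ceil (k + 1) = floor k + 2 * l k - 1 ∧
        l (k + 1) = l k / 2))
    (hpos : ∀ k ≤ n, 1 ≤ l k) :
    ∀ i : ℕ, 1 ≤ i → i ≤ n →
      n ≤ i + 6 ∨ ∃ c ∈ ({1, 2, 3} : Set ℕ), 8 * l (i + c) ≤ 7 * l i := by
  intro i h1 h2
  by_cases hn : n ≤ i + 6
  · exact Or.inl hn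
  · right
    push_neg at hn
    obtain ⟨j, rfl⟩ : ∃ j, i = j + 1 := ⟨i - 1, by omega⟩
    have s0 := hstep j (by omega)
    have s1 := hstep (j + 1) (by omega)
    have s2 := hstep (j + 2) (by omega)
    have s3 := hstep (j + 3) (by omega)
    have s4 := hstep (j + 4) (by omega)
    have s5 := hstep (j + 5) (by omega)
    have p1 := hpos (j + 1) (by omega)
    have p2 := hpos (j + 2) (by omega)
    have p3 := hpos (j + 3) (by omega)
    have p4 := hpos (j + 4) (by omega)
    have p5 := hpos (j + 5) (by omega)
    have p6 := hpos (j + 6) (by omega)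
    simp only [show j + 1 + 1 = j + 2 by omega, show j + 2 + 1 = j + 3 by omega,
      show j + 3 + 1 = j + 4 by omega, show j + 4 + 1 = j + 5 by omega,
      show j + 5 + 1 = j + 6 by omega] at s0 s1 s2 s3 s4 s5
    have key : 8 * l (j + 1 + 1) ≤ 7 * l (j + 1) ∨
        8 * l (j + 1 + 2) ≤ 7 * l (j + 1) ∨
        8 * l (j + 1 + 3) ≤ 7 * l (j + 1) := by
      simp only [show j + 1 + 1 = j + 2 by omega, show j + 1 + 2 = j + 3 by omega,
        show j + 1 + 3 = j + 4 by omega]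
      omega
    rcases key with h | h | h
    · exact ⟨1, by simp, h⟩
    · exact ⟨2, by simp, h⟩
    · exact ⟨3, by simp, h⟩
end

section
/- There exists a constant C > 0 with the following property. Consider integer sequences (floor_k), (ceil_k), (l_k) for k = 0,…,n satisfying: floor_0 ≤ ceil_0, l_0 = ⌊(ceil_0 − floor_0)/2⌋, and for every k < n either (true step) floor_{k+1} = floor_k + l_k, ceil_{k+1} = ceil_k and l_{k+1} = ⌊(ceil_{k+1} − floor_{k+1})/2⌋, or (false step) floor_{k+1} = floor_k, ceil_{k+1} = floor_k + 2·l_k − 1 and l_{k+1} = ⌊l_k/2⌋; assume moreover l_k ≥ 1 for all k ≤ n. Then n ≤ C·(log₂(ceil_0 − floor_0 + 2) + 1). -/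
/-- Claim `searchcl4` of the paper: there is a constant `C > 0` such that for any
integer sequences `floor`, `ceil`, `l` evolving by the dichotomic rule of procedure
`Search` (a "true step" sets `floor ← floor + l`, `l ← ⌊(ceil - floor)/2⌋`; a
"false step" sets `ceil ← floor + 2l - 1`, `l ← ⌊l/2⌋`), with `floor 0 ≤ ceil 0` and
`l_k ≥ 1` throughout, the number `n` of steps satisfies
`n ≤ C·(log₂(ceil 0 - floor 0 + 2) + 1)`. -/
theorem stmt11 :
    ∃ C : ℝ, 0 < C ∧
      ∀ (n : ℕ) (floor ceil l : ℕ → ℤ),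
        floor 0 ≤ ceil 0 →
        l 0 = (ceil 0 - floor 0) / 2 →
        (∀ k < n,
          (floor (k + 1) = floor k + l k ∧ ceil (k + 1) = ceil k ∧
            l (k + 1) = (ceil (k + 1) - floor (k + 1)) / 2) ∨
          (floor (k + 1) = floor k ∧ ceil (k + 1) = floor k + 2 * l k - 1 ∧
            l (k + 1) = l k / 2)) →
        (∀ k ≤ n, 1 ≤ l k) →
        (n : ℝ) ≤ C * (Real.logb 2 ((ceil 0 : ℝ) - (floor 0 : ℝ) + 2) + 1) := by
  have hr : (1 : ℝ) < 20 / 19 := by norm_num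
  have hlogr : 0 < Real.log (20 / 19) := Real.log_pos hr
  refine ⟨Real.log 2 / Real.log (20 / 19), by positivity, ?_⟩
  intro n floor ceil l h0 hl0 hstep hl
  set d : ℕ → ℤ := fun k => ceil k - floor k with hd
  -- Invariant: for all k ≤ n, 4 * l k + 1 ≥ d k ∧ 2 * l k ≤ d k + 1
  have inv : ∀ k ≤ n, d k ≤ 4 * l k + 1 ∧ 2 * l k ≤ d k + 1 := by
    intro k hk
    induction k with
    | zero =>
        have h1 : 1 ≤ l 0 := hl 0 (Nat.zero_le _)
        have : (0:ℤ) ≤ d 0 := by simp [hd]; omega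
        simp only [hd] at *
        omega
    | succ m ih =>
        have hm : m ≤ n := Nat.le_of_succ_le hk
        have ihm := ih hm
        have hs := hstep m (Nat.lt_of_succ_le hk)
        have h1 : 1 ≤ l m := hl m hm
        have h2 : 1 ≤ l (m+1) := hl (m+1) hk
        rcases hs with ⟨hf, hc, hll⟩ | ⟨hf, hc, hll⟩ <;>
          · simp only [hd] at *
            omega
  -- Contraction of the potential Φ k = 2 * d k + l k
  have contra : ∀ k < n, 20 * (2 * d (k+1) + l (k+1)) ≤ 19 * (2 * d k + l k) := by
    intro k hk
    have hk' : k ≤ n := Nat.le_of_lt hk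
    have hik := inv k hk'
    have h1 : 1 ≤ l k := hl k hk'
    have h2 : 1 ≤ l (k+1) := hl (k+1) hk
    rcases hstep k hk with ⟨hf, hc, hll⟩ | ⟨hf, hc, hll⟩ <;>
      · simp only [hd] at *
        omega
  -- Φ k ≥ 3 for k ≤ n
  have phi_lb : ∀ k ≤ n, 3 ≤ 2 * d k + l k := by
    intro k hk
    have := inv k hk
    have := hl k hk
    omega
  -- Geometric decay
  have geo : ∀ k ≤ n, 20 ^ k * (2 * d k + l k) ≤ 19 ^ k * (2 * d 0 + l 0) := by
    intro k hk
    induction k with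
    | zero => simp
    | succ m ih =>
        have hm : m ≤ n := Nat.le_of_succ_le hk
        have ihm := ih hm
        have hc := contra m (Nat.lt_of_succ_le hk)
        have h20 : (0:ℤ) ≤ 20 ^ m := by positivity
        calc 20 ^ (m+1) * (2 * d (m+1) + l (m+1))
            = 20 ^ m * (20 * (2 * d (m+1) + l (m+1))) := by ring
          _ ≤ 20 ^ m * (19 * (2 * d m + l m)) := by
              exact mul_le_mul_of_nonneg_left hc h20
          _ = 19 * (20 ^ m * (2 * d m + l m)) := by ring
          _ ≤ 19 * (19 ^ m * (2 * d 0 + l 0)) := by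
              exact mul_le_mul_of_nonneg_left ihm (by norm_num)
          _ = 19 ^ (m+1) * (2 * d 0 + l 0) := by ring
  -- Φ 0 ≤ 3 * (d 0 + 2)
  have phi0 : 2 * d 0 + l 0 ≤ 3 * (d 0 + 2) := by
    have := inv 0 (Nat.zero_le _)
    omega
  -- Key integer inequality: 20^n ≤ 19^n * (d 0 + 2)
  have key : (20:ℤ) ^ n ≤ 19 ^ n * (d 0 + 2) := by
    have h1 := geo n le_rfl
    have h2 := phi_lb n le_rfl
    have h3 : (0:ℤ) ≤ 20 ^ n := by positivity
    have h4 : (0:ℤ) ≤ 19 ^ n := by positivity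
    nlinarith [mul_le_mul_of_nonneg_left phi0 h4]
  -- d 0 ≥ 2
  have hd0 : 2 ≤ d 0 := by
    have h1 := inv 0 (Nat.zero_le _)
    have h2 := hl 0 (Nat.zero_le _)
    simp only [hd] at h1 hl0 ⊢
    omega
  -- Pass to reals
  have hdR : (2:ℝ) ≤ (d 0 : ℝ) := by exact_mod_cast hd0
  have keyR : ((20:ℝ)/19) ^ n ≤ (d 0 : ℝ) + 2 := by
    have h19 : (0:ℝ) < 19 ^ n := by positivity
    rw [div_pow, div_le_iff₀ h19]
    have : ((20:ℤ) ^ n : ℝ) ≤ ((19 ^ n * (d 0 + 2) : ℤ) : ℝ) := by exact_mod_cast key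
    push_cast at this
    linarith
  have hpos : (0:ℝ) < (d 0 : ℝ) + 2 := by linarith
  have hlog : (n : ℝ) * Real.log (20/19) ≤ Real.log ((d 0 : ℝ) + 2) := by
    have := Real.log_le_log (by positivity) keyR
    rwa [Real.log_pow] at this
  have hn : (n : ℝ) ≤ Real.log ((d 0 : ℝ) + 2) / Real.log (20/19) := by
    rw [le_div_iff₀ hlogr]; exact hlog
  have hlogb : Real.logb 2 ((ceil 0 : ℝ) - (floor 0 : ℝ) + 2)
      = Real.log ((d 0 : ℝ) + 2) / Real.log 2 := by
    have heq : (ceil 0 : ℝ) - (floor 0 : ℝ) + 2 = (d 0 : ℝ) + 2 := by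
      simp only [hd]; push_cast; ring
    rw [heq, Real.logb]
  have hlog2 : (0:ℝ) < Real.log 2 := Real.log_pos (by norm_num)
  have hlogb_nonneg : 0 ≤ Real.logb 2 ((ceil 0 : ℝ) - (floor 0 : ℝ) + 2) := by
    rw [hlogb]
    have : 0 ≤ Real.log ((d 0 : ℝ) + 2) := Real.log_nonneg (by linarith)
    positivity
  calc (n : ℝ) ≤ Real.log ((d 0 : ℝ) + 2) / Real.log (20/19) := hn
    _ = Real.log 2 / Real.log (20/19) * Real.logb 2 ((ceil 0 : ℝ) - (floor 0 : ℝ) + 2) := by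
        rw [hlogb]; field_simp
    _ ≤ Real.log 2 / Real.log (20/19) * (Real.logb 2 ((ceil 0 : ℝ) - (floor 0 : ℝ) + 2) + 1) := by
        have hC : (0:ℝ) < Real.log 2 / Real.log (20/19) := by positivity
        nlinarith
end
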